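/- arXiv:2407.03186 — 5 statements merged into one kernel-verified Lean document; each statement's English description precedes it below -/
import Mathlib

section
/- Assume b_{kk} = 0. Then for either sign ε ∈ {+1, −1}, Ẽ_ε · B · F̃_ε = μ_k(B); that is, the (i,j) entry of Ẽ_ε · B · F̃_ε equals −b_{ij} if i = k or j = k, and equals b_{ij} + [b_{ik}]_+·[b_{kj}]_+ − [−b_{ik}]_+·[−b_{kj}]_+ otherwise. -/
/-!
STATEMENT 1: Assume b_{kk} = 0. Then for either sign ε ∈ {+1, −1},
Ẽ_ε · B · F̃_ε = μ_k(B).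
-/

/-- The matrix Ẽ_ε: it agrees with the identity matrix except in its k-th column, where
`(Ẽ_ε)_{kk} = −1` and `(Ẽ_ε)_{ik} = [−ε·b_{ik}]_+` for `i ≠ k`. -/
def Etil {I : Type*} [DecidableEq I] (B : Matrix I I ℚ) (k : I) (ε : ℚ) : Matrix I I ℚ :=
  Matrix.of fun i j =>
    if j = k then (if i = k then -1 else max (-(ε * B i k)) 0)
    else (if i = j then 1 else 0)

/-- The matrix F̃_ε: it agrees with the identity matrix except in its k-th row, where
`(F̃_ε)_{kk} = −1` and `(F̃_ε)_{kj} = [ε·b_{kj}]_+` for `j ≠ k`. -/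
def Ftil {I : Type*} [DecidableEq I] (B : Matrix I I ℚ) (k : I) (ε : ℚ) : Matrix I I ℚ :=
  Matrix.of fun i j =>
    if i = k then (if j = k then -1 else max (ε * B k j) 0)
    else (if i = j then 1 else 0)

/-- The mutated matrix μ_k(B): `μ_k(B)_{ij} = −b_{ij}` if `i = k` or `j = k`, and
`μ_k(B)_{ij} = b_{ij} + [b_{ik}]_+·[b_{kj}]_+ − [−b_{ik}]_+·[−b_{kj}]_+` otherwise. -/
def mutate {I : Type*} [DecidableEq I] (B : Matrix I I ℚ) (k : I) : Matrix I I ℚ :=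
  Matrix.of fun i j =>
    if i = k ∨ j = k then -B i j
    else B i j + max (B i k) 0 * max (B k j) 0 - max (-B i k) 0 * max (-B k j) 0

private lemma sum_two {I : Type*} [Fintype I] [DecidableEq I] (a b : I) (hab : a ≠ b)
    (x y : ℚ) : ∑ p, ((if p = a then x else 0) + (if p = b then y else 0)) = x + y := by
  rw [Finset.sum_add_distrib, Finset.sum_ite_eq' Finset.univ a fun _ => x,
    Finset.sum_ite_eq' Finset.univ b fun _ => y]
  simp

private lemma sum_E {I : Type*} [Fintype I] [DecidableEq I] (B : Matrix I I ℚ) (k : I)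
    (ε : ℚ) (i q : I) :
    ∑ p, Etil B k ε i p * B p q =
      if i = k then -B k q else B i q + max (-(ε * B i k)) 0 * B k q := by
  by_cases hi : i = k
  · subst hi
    simp only [if_pos rfl]
    have : (∑ p, Etil B i ε i p * B p q) = ∑ p, (if p = i then -B i q else 0) :=
      Finset.sum_congr rfl fun p _ => by
        by_cases hp : p = i
        · simp [Etil, hp]
        · simp [Etil, hp, Ne.symm hp]
    rw [this, Finset.sum_ite_eq' Finset.univ i fun _ => -B i q]
    simp
  · simp only [if_neg hi]
    have : (∑ p, Etil B k ε i p * B p q) =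
        ∑ p, ((if p = i then B i q else 0)
          + (if p = k then max (-(ε * B i k)) 0 * B k q else 0)) := by
      apply Finset.sum_congr rfl; intro p _
      by_cases hp : p = k
      · subst hp; simp [Etil, hi, Ne.symm hi]
      · by_cases hpi : p = i
        · subst hpi; simp [Etil, hp, hi]
        · simp [Etil, hp, hpi, Ne.symm hpi]
    rw [this]
    exact sum_two i k hi _ _

private lemma sum_F {I : Type*} [Fintype I] [DecidableEq I] (B : Matrix I I ℚ) (k : I)
    (ε : ℚ) (M : I → ℚ) (j : I) :
    ∑ q, M q * Ftil B k ε q j =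
      if j = k then -(M k) else M j + M k * max (ε * B k j) 0 := by
  by_cases hj : j = k
  · subst hj
    simp only [if_pos rfl]
    have : (∑ q, M q * Ftil B j ε q j) = ∑ q, (if q = j then -(M j) else 0) :=
      Finset.sum_congr rfl fun q _ => by by_cases hq : q = j <;> simp [Ftil, hq]
    rw [this, Finset.sum_ite_eq' Finset.univ j fun _ => -(M j)]
    simp
  · simp only [if_neg hj]
    have : (∑ q, M q * Ftil B k ε q j) =
        ∑ q, ((if q = j then M j else 0)
          + (if q = k then M k * max (ε * B k j) 0 else 0)) := by
      apply Finset.sum_congr rfl; intro q _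
      by_cases hq : q = k
      · subst hq; simp [Ftil, hj, Ne.symm hj]
      · by_cases hqj : q = j
        · subst hqj; simp [Ftil, hq, hj]
        · simp [Ftil, hq, hqj, Ne.symm hqj]
    rw [this]
    exact sum_two j k hj _ _

private lemma sign_identity (ε a c : ℚ) (hε : ε = 1 ∨ ε = -1) :
    max (-(ε * a)) 0 * c + a * max (ε * c) 0 =
      max a 0 * max c 0 - max (-a) 0 * max (-c) 0 := by
  rcases hε with rfl | rfl <;> simp only [one_mul, neg_one_mul, neg_neg] <;>
    rcases le_total 0 a with ha | ha <;> rcases le_total 0 c with hc | hc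
  · rw [max_eq_right (neg_nonpos.2 ha), max_eq_left hc, max_eq_left ha,
      max_eq_right (neg_nonpos.2 hc)]; ring
  · rw [max_eq_right (neg_nonpos.2 ha), max_eq_right hc, max_eq_left ha,
      max_eq_left (neg_nonneg.2 hc)]; ring
  · rw [max_eq_left (neg_nonneg.2 ha), max_eq_left hc, max_eq_right ha,
      max_eq_right (neg_nonpos.2 hc)]; ring
  · rw [max_eq_left (neg_nonneg.2 ha), max_eq_right hc, max_eq_right ha,
      max_eq_left (neg_nonneg.2 hc)]; ring
  · rw [max_eq_left ha, max_eq_right (neg_nonpos.2 hc), max_eq_left hc,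
      max_eq_right (neg_nonpos.2 ha)]; ring
  · rw [max_eq_left ha, max_eq_left (neg_nonneg.2 hc), max_eq_right hc,
      max_eq_right (neg_nonpos.2 ha)]; ring
  · rw [max_eq_right ha, max_eq_right (neg_nonpos.2 hc), max_eq_left hc,
      max_eq_left (neg_nonneg.2 ha)]; ring
  · rw [max_eq_right ha, max_eq_left (neg_nonneg.2 hc), max_eq_right hc,
      max_eq_left (neg_nonneg.2 ha)]; ring

theorem Etil_mul_B_mul_Ftil_eq_mutate {I : Type*} [Fintype I] [DecidableEq I]
    (B : Matrix I I ℚ) (k : I) (hB : B k k = 0) (ε : ℚ) (hε : ε = 1 ∨ ε = -1) :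
    Etil B k ε * B * Ftil B k ε = mutate B k := by
  ext i j
  rw [Matrix.mul_apply]
  simp only [Matrix.mul_apply]
  rw [sum_F B k ε (fun q => ∑ p, Etil B k ε i p * B p q) j]
  by_cases hj : j = k
  · simp only [if_pos hj, sum_E]
    by_cases hi : i = k
    · simp [mutate, hi, hj, hB]
    · simp [mutate, hi, hj, hB]
  · simp only [if_neg hj, sum_E]
    by_cases hi : i = k
    · simp only [if_pos hi]
      simp [mutate, hi, hj, hB]
    · simp only [if_neg hi]
      simp only [mutate, Matrix.of_apply, hi, hj, or_self, if_false, hB, mul_zero, add_zero]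
      have h := sign_identity ε (B i k) (B k j) hε
      linarith
end

section
/- Assume b_{kk} = 0. Then Ẽ_{+1} · B · F̃_{+1} = Ẽ_{−1} · B · F̃_{−1}; in other words, the mutated matrix obtained as Ẽ_ε · B · F̃_ε is independent of the choice of the sign ε. -/
lemma Etil_mul_apply {I : Type*} [Fintype I] [DecidableEq I] (B : Matrix I I ℚ) (k : I)
    (ε : ℚ) (i j : I) :
    (Etil B k ε * B) i j =
      if i = k then -B k j else B i j + max (-(ε * B i k)) 0 * B k j := by
  rw [Matrix.mul_apply]
  by_cases hi : i = k
  · rw [if_pos hi]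
    rw [Finset.sum_eq_single k]
    · simp [Etil, hi]
    · intro l _ hl
      simp [Etil, hi, hl, Ne.symm hl]
    · intro h; exact absurd (Finset.mem_univ k) h
  · rw [if_neg hi]
    rw [show (∑ l, Etil B k ε i l * B l j)
        = ∑ l, ((if l = k then max (-(ε * B i k)) 0 * B k j else 0)
            + (if l = i then B i j else 0)) from Finset.sum_congr rfl (by
          intro l _
          by_cases hl : l = k
          · simp [Etil, hl, hi, Ne.symm hi]
          · by_cases hli : l = i
            · simp [Etil, hl, hli, hi]
            · simp [Etil, hl, hli, Ne.symm hli])]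
    rw [Finset.sum_add_distrib]
    simp [add_comm]

lemma mul_Ftil_apply {I : Type*} [Fintype I] [DecidableEq I] (B M : Matrix I I ℚ) (k : I)
    (ε : ℚ) (i j : I) :
    (M * Ftil B k ε) i j =
      if j = k then -M i k else M i j + M i k * max (ε * B k j) 0 := by
  rw [Matrix.mul_apply]
  by_cases hj : j = k
  · rw [if_pos hj]
    rw [Finset.sum_eq_single k]
    · simp [Ftil, hj]
    · intro l _ hl
      simp [Ftil, hl, hj, Ne.symm hl]
    · intro h; exact absurd (Finset.mem_univ k) h
  · rw [if_neg hj]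
    rw [show (∑ l, M i l * Ftil B k ε l j)
        = ∑ l, ((if l = k then M i k * max (ε * B k j) 0 else 0)
            + (if l = j then M i j else 0)) from Finset.sum_congr rfl (by
          intro l _
          by_cases hl : l = k
          · simp [Ftil, hl, hj, Ne.symm hj]
          · by_cases hlj : l = j
            · simp [Ftil, hl, hlj, hj]
            · simp [Ftil, hl, hlj, Ne.symm hlj])]
    rw [Finset.sum_add_distrib]
    simp [add_comm]

theorem Etil_mul_B_mul_Ftil_sign_independent {I : Type*} [Fintype I] [DecidableEq I]
    (B : Matrix I I ℚ) (k : I) (hB : B k k = 0) :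
    Etil B k 1 * B * Ftil B k 1 = Etil B k (-1) * B * Ftil B k (-1) := by
  have hmax : ∀ x : ℚ, max (-x) 0 = max x 0 - x := by
    intro x
    rcases le_total x 0 with h | h
    · rw [max_eq_left (by linarith), max_eq_right h]; ring
    · rw [max_eq_right (by linarith), max_eq_left h]; ring
  ext i j
  simp only [mul_Ftil_apply, Etil_mul_apply]
  by_cases hi : i = k <;> by_cases hj : j = k <;>
    simp only [hi, hj, if_pos, if_neg, if_true, if_false] <;>
    simp only [one_mul, neg_one_mul, neg_neg, hB, hmax] <;> ring
end

section
/- Suppose there exist strictly positive rationals (d_i^∨)_{i∈I} such that d_i^∨·b_{ij} = −d_j^∨·b_{ji} for all i, j ∈ I (i.e., B is skew-symmetrizable). Then the mutated matrix is skew-symmetrizable with the same skew-symmetrizers: d_i^∨·μ_k(B)_{ij} = −d_j^∨·μ_k(B)_{ji} for all i, j ∈ I. -/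
theorem mutate_skewSymmetrizable {I : Type*} [Fintype I] [DecidableEq I]
    (B : Matrix I I ℚ) (k : I) (d : I → ℚ) (hd : ∀ i, 0 < d i)
    (hskew : ∀ i j, d i * B i j = -(d j * B j i)) :
    ∀ i j, d i * mutate B k i j = -(d j * mutate B k j i) := by
  have key : ∀ a b : I, d a * max (B a b) 0 = d b * max (-B b a) 0 := by
    intro a b
    rw [mul_max_of_nonneg _ _ (hd a).le, mul_max_of_nonneg _ _ (hd b).le,
      mul_zero, mul_zero]
    congr 1
    have := hskew a b
    linarith
  have key' : ∀ a b : I, d a * max (-B a b) 0 = d b * max (B b a) 0 := by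
    intro a b
    rw [mul_max_of_nonneg _ _ (hd a).le, mul_max_of_nonneg _ _ (hd b).le,
      mul_zero, mul_zero]
    congr 1
    have := hskew a b
    linarith
  intro i j
  simp only [mutate, Matrix.of_apply]
  by_cases hij : i = k ∨ j = k
  · have hji : j = k ∨ i = k := hij.symm
    rw [if_pos hij, if_pos hji]
    have := hskew i j
    linarith
  · have hji : ¬(j = k ∨ i = k) := fun h => hij h.symm
    rw [if_neg hij, if_neg hji]
    have h1 : d i * (max (B i k) 0 * max (B k j) 0)
        = d k * (max (-B k i) 0 * max (B k j) 0) := by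
      rw [← mul_assoc, ← mul_assoc, key i k]
    have h2 : d i * (max (-B i k) 0 * max (-B k j) 0)
        = d k * (max (B k i) 0 * max (-B k j) 0) := by
      rw [← mul_assoc, ← mul_assoc, key' i k]
    have h3 : d j * (max (B j k) 0 * max (B k i) 0)
        = d k * (max (-B k j) 0 * max (B k i) 0) := by
      rw [← mul_assoc, ← mul_assoc, key j k]
    have h4 : d j * (max (-B j k) 0 * max (-B k i) 0)
        = d k * (max (B k j) 0 * max (-B k i) 0) := by
      rw [← mul_assoc, ← mul_assoc, key' j k]
    have h0 := hskew i j
    nlinarith [h1, h2, h3, h4, h0]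
end

section
/- For any η, g ∈ ℤ^I, the set {g' ∈ ℤ^I : η ⪯ g' ⪯ g} is finite. -/
/-! Common setup. -/

noncomputable section

namespace CAFreeze

variable {I : Type*} [Fintype I] [DecidableEq I]

/-- The Laurent polynomial ring LP = ℤ[x_i^{±1} : i ∈ I], modeled as the group algebra of
ℤ^I over ℤ. -/
abbrev LP (I : Type*) := AddMonoidAlgebra ℤ (I → ℤ)

/-- The monomial x^m for an exponent vector m ∈ ℤ^I. -/
def mono (m : I → ℤ) : LP I := AddMonoidAlgebra.ofCoeff (Finsupp.single m 1)

/-- The coefficient of the monomial x^m in z ∈ LP. -/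
def coeff (z : LP I) (m : I → ℤ) : ℤ := (AddMonoidAlgebra.coeff z : (I → ℤ) →₀ ℤ) m

variable (Iuf : Finset I) (Bt : I → {i // i ∈ Iuf} → ℤ)

/-- The linear map p* : ℤ^{I_uf} → ℤ^I, p*(n) = B̃·n. -/
def pstar (n : {i // i ∈ Iuf} → ℤ) : I → ℤ := fun i => ∑ kk : {i // i ∈ Iuf}, Bt i kk * n kk

/-- p*(n) for n ∈ ℕ^{I_uf}. -/
def pstarN (n : {i // i ∈ Iuf} → ℕ) : I → ℤ := pstar Iuf Bt fun kk => (n kk : ℤ)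

/-- supp n = {k ∈ I_uf : n_k ≠ 0}, as a subset of I. -/
def suppn (n : {i // i ∈ Iuf} → ℕ) : Set I := {i | ∃ h : i ∈ Iuf, n ⟨i, h⟩ ≠ 0}

/-- LP_{⪯m}: the ℤ-submodule of LP spanned by the monomials x^{m+p*(n)}, n ∈ ℕ^{I_uf}. -/
def LPle (m : I → ℤ) : Submodule ℤ (LP I) :=
  Submodule.span ℤ {z : LP I | ∃ n : {i // i ∈ Iuf} → ℕ, z = mono (m + pstarN Iuf Bt n)}

open Classical in
/-- The freezing operator frz_{F,m}: it keeps the monomials x^{m+p*(n)} with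
supp n ∩ F = ∅ and kills the monomials x^{m+p*(n)} with supp n ∩ F ≠ ∅. -/
def frz (F : Finset I) (m : I → ℤ) (z : LP I) : LP I :=
  AddMonoidAlgebra.ofCoeff <| Finsupp.filter
    (fun e => ∃ n : {i // i ∈ Iuf} → ℕ, e = m + pstarN Iuf Bt n ∧ suppn Iuf n ∩ (F : Set I) = ∅) (AddMonoidAlgebra.coeff z)

/-- z ∈ LP is pointed at g: z = Σ_{n ∈ ℕ^{I_uf}} c_n x^{g+p*(n)} with c_0 = 1. -/
def Pointed (g : I → ℤ) (z : LP I) : Prop :=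
  coeff z g = 1 ∧
    ∀ e ∈ (AddMonoidAlgebra.coeff z : (I → ℤ) →₀ ℤ).support, ∃ n : {i // i ∈ Iuf} → ℕ, e = g + pstarN Iuf Bt n

/-- supp z = ∪_{c_n ≠ 0} supp n, for a g-pointed z = Σ_n c_n x^{g+p*(n)}. -/
def suppz (g : I → ℤ) (z : LP I) : Set I :=
  ⋃ n ∈ {n : {i // i ∈ Iuf} → ℕ | coeff z (g + pstarN Iuf Bt n) ≠ 0}, suppn Iuf n

/-- suppDim z ∈ ℕ^{I_uf}: the coordinatewise maximum of {n : c_n ≠ 0}, for a g-pointed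
z = Σ_n c_n x^{g+p*(n)}. -/
def suppDim (g : I → ℤ) (z : LP I) : {i // i ∈ Iuf} → ℕ :=
  fun kk => sSup {d : ℕ | ∃ n : {i // i ∈ Iuf} → ℕ, coeff z (g + pstarN Iuf Bt n) ≠ 0 ∧ n kk = d}


lemma pstar_add (n m : {i // i ∈ Iuf} → ℤ) :
    pstar Iuf Bt (n + m) = pstar Iuf Bt n + pstar Iuf Bt m := by
  funext i
  simp [pstar, Finset.sum_add_distrib, mul_add]

lemma pstarN_add (n m : {i // i ∈ Iuf} → ℕ) :
    pstarN Iuf Bt (n + m) = pstarN Iuf Bt n + pstarN Iuf Bt m := by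
  have : (fun kk => ((n + m) kk : ℤ)) = (fun kk => (n kk : ℤ)) + (fun kk => (m kk : ℤ)) := by
    funext kk; simp
  rw [pstarN, this, pstar_add]; rfl

lemma pstarN_inj (hfull : Function.Injective (pstar Iuf Bt)) :
    Function.Injective (pstarN Iuf Bt) := by
  intro n m h
  have := hfull h
  funext kk
  exact_mod_cast congrFun this kk

/-!
STATEMENT 8: For any η, g ∈ ℤ^I, the set {g' ∈ ℤ^I : η ⪯ g' ⪯ g} is finite, where ⪯ is the
dominance order: g' ⪯ g iff g' = g + p*(n) for some n ∈ ℕ^{I_uf}.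
-/
theorem dominance_interval_finite (hfull : Function.Injective (pstar Iuf Bt))
    (η g : I → ℤ) :
    {g' : I → ℤ | (∃ n : {i // i ∈ Iuf} → ℕ, g' = g + pstarN Iuf Bt n) ∧
      (∃ n : {i // i ∈ Iuf} → ℕ, η = g' + pstarN Iuf Bt n)}.Finite := by
  rcases Set.eq_empty_or_nonempty {g' : I → ℤ | (∃ n : {i // i ∈ Iuf} → ℕ, g' = g + pstarN Iuf Bt n) ∧
      (∃ n : {i // i ∈ Iuf} → ℕ, η = g' + pstarN Iuf Bt n)} with h | ⟨g0, ⟨n0, hn0⟩, m0, hm0⟩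
  · rw [h]; exact Set.finite_empty
  · have hN : η = g + pstarN Iuf Bt (n0 + m0) := by
      rw [pstarN_add, hm0, hn0]; abel
    apply Set.Finite.subset (Set.Finite.image (fun n => g + pstarN Iuf Bt n)
      ((Set.finite_Iic (n0 + m0))))
    rintro g' ⟨⟨n, hn⟩, ⟨m, hm⟩⟩
    have heq : pstarN Iuf Bt (n + m) = pstarN Iuf Bt (n0 + m0) := by
      have : g + pstarN Iuf Bt (n + m) = g + pstarN Iuf Bt (n0 + m0) := by
        rw [pstarN_add, ← hN, hm, hn]; abel
      have := congrFun this
      funext i; have h2 := this i; simpa using h2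
    have hnm := pstarN_inj Iuf Bt hfull heq
    refine ⟨n, ?_, hn.symm⟩
    intro kk
    calc n kk ≤ (n + m) kk := by simp
    _ = (n0 + m0) kk := by rw [hnm]

end CAFreeze
end
end

section
/- Let Θ, Θ' ⊆ ℤ^I, let S = {s_g : g∈Θ} be a Θ-pointed family, and let Z = {z_h : h∈Θ'} be a Θ'-pointed family. If every z_h lies in A^Θ and Z is a ℤ-basis of A^Θ = ⊕_{g∈Θ} ℤ·s_g, then Θ' = Θ. -/
/-! Common setup. -/

noncomputable section

namespace CAFreeze

variable {I : Type*} [Fintype I] [DecidableEq I]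

variable (Iuf : Finset I) (Bt : I → {i // i ∈ Iuf} → ℤ)

private lemma exists_maximal_rel {α : Type*} (r : α → α → Prop)
    (htrans : ∀ a b c, r a b → r b c → r a c) (hirr : ∀ a, ¬ r a a)
    (S : Finset α) (hne : S.Nonempty) : ∃ m ∈ S, ∀ b ∈ S, ¬ r m b := by
  classical
  induction S using Finset.induction_on with
  | empty => simpa using hne
  | @insert a S' ha IH =>
    rcases S'.eq_empty_or_nonempty with h0 | h1
    · subst h0
      refine ⟨a, by simp, ?_⟩
      intro b hb
      simp only [Finset.mem_insert, Finset.notMem_empty, or_false] at hb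
      subst hb; exact hirr b
    · obtain ⟨m, hm, hmax⟩ := IH h1
      by_cases hr : r m a
      · refine ⟨a, Finset.mem_insert_self _ _, ?_⟩
        intro b hb
        rcases Finset.mem_insert.mp hb with rfl | hb
        · exact hirr b
        · exact fun hab => hmax b hb (htrans m a b hr hab)
      · refine ⟨m, Finset.mem_insert_of_mem hm, ?_⟩
        intro b hb
        rcases Finset.mem_insert.mp hb with rfl | hb
        · exact hr
        · exact hmax b hb

lemma pstarN_zero : pstarN Iuf Bt 0 = 0 := by
  funext i
  simp [pstarN, pstar]

lemma pstarN_eq_zero (hfull : Function.Injective (pstar Iuf Bt))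
    {n : {i // i ∈ Iuf} → ℕ} (h : pstarN Iuf Bt n = 0) : n = 0 := by
  have h0 : pstar Iuf Bt (fun kk => (n kk : ℤ)) = pstar Iuf Bt 0 := by
    rw [show pstar Iuf Bt 0 = 0 from by funext i; simp [pstar]]
    exact h
  have hz := hfull h0
  funext kk
  have h2 : (n kk : ℤ) = 0 := congrFun hz kk
  exact_mod_cast h2

/-- Key lemma: if `w` is `h`-pointed and lies in the span of a `Θ`-pointed family, then
`h ∈ Θ`. -/
lemma pointed_mem_span_of_pointed_family (hfull : Function.Injective (pstar Iuf Bt))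
    (Θ : Set (I → ℤ)) (s : (I → ℤ) → LP I)
    (hs : ∀ g ∈ Θ, Pointed Iuf Bt g (s g))
    (h : I → ℤ) (w : LP I) (hw : Pointed Iuf Bt h w)
    (hmem : w ∈ Submodule.span ℤ (s '' Θ)) : h ∈ Θ := by
  classical
  obtain ⟨c, hsupp, hsum⟩ := Submodule.mem_span_set.mp hmem
  -- choose a degree for each element of the support
  have hchoose : ∀ a : LP I, ∃ g : I → ℤ, a ∈ c.support → g ∈ Θ ∧ s g = a := by
    intro a
    by_cases ha : a ∈ c.support
    · obtain ⟨g, hg, hsg⟩ := hsupp ha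
      exact ⟨g, fun _ => ⟨hg, hsg⟩⟩
    · exact ⟨0, fun h' => absurd h' ha⟩
  choose deg hdeg using hchoose
  have hpointed : ∀ a ∈ c.support, Pointed Iuf Bt (deg a) a := by
    intro a ha
    have := hs (deg a) ((hdeg a ha).1)
    rwa [(hdeg a ha).2] at this
  -- coefficient of w at any exponent
  have hcoeff : ∀ e, coeff w e = ∑ a ∈ c.support, c a * coeff a e := by
    intro e
    rw [← hsum]
    simp only [coeff, Finsupp.sum]
    rw [AddMonoidAlgebra.coeff_sum, Finsupp.finset_sum_apply]
    exact Finset.sum_congr rfl fun a _ => by rw [AddMonoidAlgebra.coeff_smul_apply, smul_eq_mul]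
  -- Step 1: some member dominates h
  have h1 : ∃ a ∈ c.support, ∃ n : {i // i ∈ Iuf} → ℕ, h = deg a + pstarN Iuf Bt n := by
    have hco : coeff w h ≠ 0 := by rw [hw.1]; exact one_ne_zero
    rw [hcoeff h] at hco
    obtain ⟨a, ha, hane⟩ := Finset.exists_ne_zero_of_sum_ne_zero hco
    have hca : coeff a h ≠ 0 := fun h0 => hane (by rw [h0, mul_zero])
    have hmemsupp : h ∈ (AddMonoidAlgebra.coeff a : (I → ℤ) →₀ ℤ).support := Finsupp.mem_support_iff.mpr hca
    obtain ⟨n, hn⟩ := (hpointed a ha).2 h hmemsupp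
    exact ⟨a, ha, n, hn⟩
  -- the strict dominance relation on support elements
  set r : LP I → LP I → Prop :=
    fun a b => ∃ n : {i // i ∈ Iuf} → ℕ, n ≠ 0 ∧ deg a = deg b + pstarN Iuf Bt n with hr
  have hirr : ∀ a, ¬ r a a := by
    intro a ⟨n, hn0, hdeq⟩
    apply hn0
    apply pstarN_eq_zero Iuf Bt hfull
    have : deg a + pstarN Iuf Bt n = deg a + 0 := by rw [add_zero]; exact hdeq.symm
    exact add_left_cancel this
  have htrans : ∀ a b cc, r a b → r b cc → r a cc := by
    rintro a b cc ⟨n, hn0, hdn⟩ ⟨m, hm0, hdm⟩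
    refine ⟨m + n, ?_, ?_⟩
    · intro h0
      apply hn0
      funext kk
      have := congrFun h0 kk
      simp only [Pi.add_apply, Pi.zero_apply, Nat.add_eq_zero] at this
      exact this.2
    · rw [hdn, hdm, pstarN_add, add_assoc]
  -- Step 2: take a maximal dominating element
  set S : Finset (LP I) :=
    c.support.filter (fun a => ∃ n : {i // i ∈ Iuf} → ℕ, h = deg a + pstarN Iuf Bt n) with hS
  have hSne : S.Nonempty := by
    obtain ⟨a, ha, n, hn⟩ := h1
    exact ⟨a, Finset.mem_filter.mpr ⟨ha, n, hn⟩⟩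
  obtain ⟨astar, hastarS, hmax⟩ := exists_maximal_rel r htrans hirr S hSne
  obtain ⟨hastar, m, hm⟩ := Finset.mem_filter.mp hastarS
  -- astar is maximal in the whole support among things related to it
  have hmax' : ∀ b ∈ c.support, ¬ r astar b := by
    rintro b hb ⟨n, hn0, hdeq⟩
    apply hmax b
    · refine Finset.mem_filter.mpr ⟨hb, n + m, ?_⟩
      rw [hm, hdeq, pstarN_add, add_assoc]
    · exact ⟨n, hn0, hdeq⟩
  -- Step 3: coeff w (deg astar) = c astar ≠ 0
  have h3 : coeff w (deg astar) = c astar := by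
    rw [hcoeff]
    rw [Finset.sum_eq_single astar]
    · rw [(hpointed astar hastar).1, mul_one]
    · intro b hb hbne
      by_cases hcb : coeff b (deg astar) = 0
      · rw [hcb, mul_zero]
      · exfalso
        have hmemsupp : deg astar ∈ (AddMonoidAlgebra.coeff b : (I → ℤ) →₀ ℤ).support := Finsupp.mem_support_iff.mpr hcb
        obtain ⟨n, hn⟩ := (hpointed b hb).2 (deg astar) hmemsupp
        by_cases hn0 : n = 0
        · subst hn0
          rw [pstarN_zero, add_zero] at hn
          apply hbne
          have : s (deg b) = s (deg astar) := by rw [hn]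
          rw [(hdeg b hb).2, (hdeg astar hastar).2] at this
          exact this
        · exact hmax' b hb ⟨n, hn0, hn⟩
    · intro habs; exact absurd hastar habs
  have hne0 : coeff w (deg astar) ≠ 0 := by
    rw [h3]; exact Finsupp.mem_support_iff.mp hastar
  -- Step 4: antisymmetry gives h = deg astar
  have hmemsupp : deg astar ∈ (AddMonoidAlgebra.coeff w : (I → ℤ) →₀ ℤ).support := Finsupp.mem_support_iff.mpr hne0
  obtain ⟨nn, hnn⟩ := hw.2 (deg astar) hmemsupp
  have hzero : pstarN Iuf Bt (nn + m) = 0 := by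
    have : h + (pstarN Iuf Bt nn + pstarN Iuf Bt m) = h + 0 := by
      rw [add_zero, ← add_assoc, ← hnn, ← hm]
    rw [pstarN_add]
    exact add_left_cancel this
  have hm0 : m = 0 := by
    have := pstarN_eq_zero Iuf Bt hfull hzero
    funext kk
    have := congrFun this kk
    simp only [Pi.add_apply, Pi.zero_apply, Nat.add_eq_zero] at this
    exact this.2
  rw [hm0, pstarN_zero, add_zero] at hm
  rw [hm]
  exact (hdeg astar hastar).1

/-!
STATEMENT 10: Let Θ, Θ' ⊆ ℤ^I, let S = {s_g : g∈Θ} be a Θ-pointed family, and let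
Z = {z_h : h∈Θ'} be a Θ'-pointed family. If every z_h lies in A^Θ and Z is a ℤ-basis of
A^Θ = ⊕_{g∈Θ} ℤ·s_g, then Θ' = Θ.
-/
theorem pointed_basis_same_degrees (hfull : Function.Injective (pstar Iuf Bt))
    (Θ Θ' : Set (I → ℤ)) (s z : (I → ℤ) → LP I)
    (hs : ∀ g ∈ Θ, Pointed Iuf Bt g (s g))
    (hz : ∀ h ∈ Θ', Pointed Iuf Bt h (z h))
    -- every z_h lies in A^Θ
    (hmem : ∀ h ∈ Θ', z h ∈ Submodule.span ℤ (s '' Θ))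
    -- Z is a ℤ-basis of A^Θ: linearly independent and spanning
    (hli : LinearIndependent ℤ (fun h : Θ' => z (h : I → ℤ)))
    (hspan : Submodule.span ℤ (z '' Θ') = Submodule.span ℤ (s '' Θ)) :
    Θ' = Θ := by
  apply Set.Subset.antisymm
  · intro h hh
    exact pointed_mem_span_of_pointed_family Iuf Bt hfull Θ s hs h (z h) (hz h hh) (hmem h hh)
  · intro g hg
    refine pointed_mem_span_of_pointed_family Iuf Bt hfull Θ' z hz g (s g) (hs g hg) ?_
    rw [hspan]
    exact Submodule.subset_span (Set.mem_image_of_mem s hg)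

end CAFreeze
end
end
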